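/- Let (X,B,λ) be a σ-finite standard Borel measure space, T : X → X measurable and nonsingular with respect to λ, α a countable Markov partition for (X,λ,T), and μ a σ-finite measure equivalent to λ with 0 < μ(s) < ∞ for all s ∈ α. Then the identity μ∘φ⁻¹ = ν_μ holds if and only if for every s ∈ α and every bounded measurable g : X → ℝ one has ∫_X 1_s·(g∘T) dμ = ∫_X (Σ_{t∈α} (μ(s)p(s,t)/μ(t))·1_t)·g dμ (i.e. the Perron–Frobenius operator of T with respect to μ sends 1_s to Σ_t (μ(s)p(s,t)/μ(t))·1_t). Moreover, in that case μ is T-invariant if and only if ν_μ is invariant under the left shift on α^{ℕ}. -/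

import Mathlib

open MeasureTheory Set
open scoped ENNReal

set_option maxHeartbeats 1000000

noncomputable section

/-- helper: a measure gives equal mass to sets whose symmetric difference is null -/
theorem aux_meq {X : Type*} [MeasurableSpace X] (ρ : Measure X) (A B : Set X)
    (h : ρ ((A \ B) ∪ (B \ A)) = 0) : ρ A = ρ B := by
  have h1 : ρ (A \ B) = 0 := measure_mono_null subset_union_left h
  have h2 : ρ (B \ A) = 0 := measure_mono_null subset_union_right h
  apply le_antisymm
  · calc ρ A ≤ ρ (B ∪ (A \ B)) := measure_mono (by intro x hx; by_cases hb : x ∈ B <;> simp [hb, hx])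
    _ ≤ ρ B + ρ (A \ B) := measure_union_le _ _
    _ = ρ B := by rw [h1, add_zero]
  · calc ρ B ≤ ρ (A ∪ (B \ A)) := measure_mono (by intro x hx; by_cases hb : x ∈ A <;> simp [hb, hx])
    _ ≤ ρ A + ρ (B \ A) := measure_union_le _ _
    _ = ρ A := by rw [h2, add_zero]

theorem aux_null_preimage {X : Type*} [MeasurableSpace X] (lam : Measure X)
    (T : X → X) (hT : Measurable T) (hns : lam.map T ≪ lam) (Z : Set X)
    (hZ : lam Z = 0) : lam (T ⁻¹' Z) = 0 := by
  have h1 : lam (toMeasurable lam Z) = 0 := by rwa [measure_toMeasurable]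
  have h2 : lam (T ⁻¹' toMeasurable lam Z) = 0 := by
    have := hns h1
    rwa [Measure.map_apply hT (measurableSet_toMeasurable lam Z)] at this
  exact measure_mono_null (preimage_mono (subset_toMeasurable lam Z)) h2

theorem aux_null_preimage_iter {X : Type*} [MeasurableSpace X] (lam : Measure X)
    (T : X → X) (hT : Measurable T) (hns : lam.map T ≪ lam) (n : ℕ) (Z : Set X)
    (hZ : lam Z = 0) : lam (T^[n] ⁻¹' Z) = 0 := by
  induction n with
  | zero => simpa using hZ
  | succ n ih =>
      have : T^[n+1] ⁻¹' Z = T ⁻¹' (T^[n] ⁻¹' Z) := by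
        ext x; simp [Function.iterate_succ_apply']
      rw [this]
      exact aux_null_preimage lam T hT hns _ ih

theorem markov_coding_characterization
    {X : Type*} [MeasurableSpace X] [StandardBorelSpace X]
    (lam : Measure X) [SigmaFinite lam]
    (T : X → X) (hT : Measurable T) (hns : lam.map T ≪ lam)
    {ι : Type*} [Countable ι] [MeasurableSpace ι] [MeasurableSingletonClass ι]
    (s : ι → Set X) (hsm : ∀ i, MeasurableSet (s i))
    (hdisj : Pairwise (Function.onFun Disjoint s))
    (hcover : lam ((⋃ i, s i)ᶜ) = 0)
    (hpos : ∀ i, 0 < lam (s i)) (hfin : ∀ i, lam (s i) < ⊤)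
    -- transition probabilities
    (p : ι → ι → ℝ≥0∞) (hp : p = fun i j => lam (s i ∩ T ⁻¹' s j) / lam (s i))
    -- (M1): the σ-field generated by the pulled-back partition is everything mod `λ`
    (hM1 : ∀ A : Set X, MeasurableSet A → ∃ A',
      MeasurableSet[MeasurableSpace.generateFrom
        {t : Set X | ∃ (i : ι) (n : ℕ), t = T^[n] ⁻¹' s i}] A' ∧
      lam ((A \ A') ∪ (A' \ A)) = 0)
    -- (M2): `T` is invertible λ-a.e. on each `s i`
    (hM2 : ∀ i, ∃ N : Set X, lam N = 0 ∧ Set.InjOn T (s i \ N))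
    -- (M3): the forward image `T(s i)` belongs to `σ(α)` mod `λ`
    (hM3 : ∀ i, ∃ A', MeasurableSet[MeasurableSpace.generateFrom (Set.range s)] A' ∧
      lam ((T '' s i \ A') ∪ (A' \ T '' s i)) = 0)
    -- `μ` equivalent to `λ`, finite positive on partition elements
    (μ : Measure X) [SigmaFinite μ] (hμlam : μ ≪ lam) (hlamμ : lam ≪ μ)
    (hμs : ∀ i, 0 < μ (s i) ∧ μ (s i) < ⊤)
    -- the coding map `φ`
    (φ : X → ℕ → ι) (hφm : Measurable φ)
    (hφ : ∀ᵐ x ∂lam, ∀ n : ℕ, T^[n] x ∈ s (φ x n))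
    -- `ν` is the Markov measure on `α^ℕ` with initial distribution `μ` and transitions `p`
    (ν : Measure (ℕ → ι))
    (hν : ∀ (n : ℕ) (w : ℕ → ι),
      ν {ω : ℕ → ι | ∀ k ≤ n, ω k = w k}
        = μ (s (w 0)) * ∏ k ∈ Finset.range n, p (w k) (w (k+1))) :
    (μ.map φ = ν ↔
      ∀ (i : ι) (g : X → ℝ), Measurable g → (∃ C : ℝ, ∀ x, |g x| ≤ C) →
        ∫ x, Set.indicator (s i) (fun _ => (1:ℝ)) x * g (T x) ∂μ
          = ∫ x, (∑' j : ι, (μ (s i) * p i j / μ (s j)).toReal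
              * Set.indicator (s j) (fun _ => (1:ℝ)) x) * g x ∂μ)
    ∧ (μ.map φ = ν →
        (μ.map T = μ ↔ ν.map (fun ω n => ω (n+1)) = ν)) := by
  -- basic facts
  have hμ0 : ∀ i, μ (s i) ≠ 0 := fun i => (hμs i).1.ne'
  have hμt : ∀ i, μ (s i) ≠ ⊤ := fun i => (hμs i).2.ne
  have hl0 : ∀ i, lam (s i) ≠ 0 := fun i => (hpos i).ne'
  have hlt : ∀ i, lam (s i) ≠ ⊤ := fun i => (hfin i).ne
  have hnull : ∀ Z : Set X, lam Z = 0 → lam (T ⁻¹' Z) = 0 :=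
    aux_null_preimage lam T hT hns
  have hnulln : ∀ (n : ℕ) (Z : Set X), lam Z = 0 → lam (T^[n] ⁻¹' Z) = 0 :=
    aux_null_preimage_iter lam T hT hns
  -- the transition matrix is stochastic
  have hple : ∀ i j, p i j ≤ 1 := by
    intro i j; rw [hp]
    exact ENNReal.div_le_of_le_mul (by rw [one_mul]; exact measure_mono inter_subset_left)
  have hpt : ∀ i j, p i j ≠ ⊤ := fun i j => (lt_of_le_of_lt (hple i j) (by norm_num)).ne
  have hp1 : ∀ i, ∑' j, p i j = 1 := by
    intro i
    have hdis : Pairwise (Function.onFun Disjoint fun j => s i ∩ T ⁻¹' s j) := by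
      intro a b hab
      exact ((hdisj hab).preimage T).mono inter_subset_right inter_subset_right
    have hmeas : ∀ j, MeasurableSet (s i ∩ T ⁻¹' s j) :=
      fun j => (hsm i).inter ((hsm j).preimage hT)
    have hsum : ∑' j, lam (s i ∩ T ⁻¹' s j) = lam (⋃ j, s i ∩ T ⁻¹' s j) :=
      (measure_iUnion hdis hmeas).symm
    have hU : (⋃ j, s i ∩ T ⁻¹' s j) = s i ∩ T ⁻¹' (⋃ j, s j) := by
      rw [preimage_iUnion, inter_iUnion]
    have hd0 : lam (s i \ T ⁻¹' (⋃ j, s j)) = 0 := by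
      refine measure_mono_null (fun x hx => ?_) (hnull _ hcover)
      exact hx.2
    have hfull : lam (s i ∩ T ⁻¹' (⋃ j, s j)) = lam (s i) := by
      refine le_antisymm (measure_mono inter_subset_left) ?_
      calc lam (s i) ≤ lam ((s i ∩ T ⁻¹' (⋃ j, s j)) ∪ (s i \ T ⁻¹' (⋃ j, s j))) := by
            refine measure_mono (fun x hx => ?_)
            by_cases h : x ∈ T ⁻¹' (⋃ j, s j)
            · exact Or.inl ⟨hx, h⟩
            · exact Or.inr ⟨hx, h⟩
        _ ≤ lam (s i ∩ T ⁻¹' (⋃ j, s j)) + lam (s i \ T ⁻¹' (⋃ j, s j)) := measure_union_le _ _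
        _ = lam (s i ∩ T ⁻¹' (⋃ j, s j)) := by rw [hd0, add_zero]
    rw [hp]
    simp only [div_eq_mul_inv]
    rw [ENNReal.tsum_mul_right, hsum, hU, hfull, ← div_eq_mul_inv]
    exact ENNReal.div_self (hl0 i) (hlt i)
  -- the weights of the PF operator
  set c : ι → ι → ℝ≥0∞ := fun i j => μ (s i) * p i j / μ (s j) with hc
  have hcfin : ∀ i j, c i j ≠ ⊤ := by
    intro i j
    simp only [hc]
    exact (ENNReal.div_lt_top (ENNReal.mul_ne_top (hμt i) (hpt i j)) (hμ0 j)).ne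
  have hcmul : ∀ i j, c i j * μ (s j) = μ (s i) * p i j := by
    intro i j
    simp only [hc]
    exact ENNReal.div_mul_cancel (hμ0 j) (hμt j)
  -- the cylinder sets in X
  set Cs : (ℕ → ι) → ℕ → Set X := fun w n => ⋂ k ≤ n, T^[k] ⁻¹' s (w k) with hCs
  have hCmeas : ∀ w n, MeasurableSet (Cs w n) := by
    intro w n
    exact MeasurableSet.biInter (to_countable _)
      (fun k _ => (hsm (w k)).preimage (hT.iterate k))
  have hCsub : ∀ w n, Cs w n ⊆ s (w 0) := by
    intro w n x hx
    have := mem_iInter₂.mp hx 0 (Nat.zero_le n)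
    simpa using this
  -- the good set for the coding map
  set G : Set X := {x | ∀ n : ℕ, T^[n] x ∈ s (φ x n)} with hG
  have hGnull : lam Gᶜ = 0 := by
    have := ae_iff.mp hφ
    simpa [hG, compl_setOf] using this
  have hμGnull : μ Gᶜ = 0 := hμlam hGnull
  -- the cylinder condition
  set Cyl : Prop := ∀ (n : ℕ) (w : ℕ → ι),
    μ (Cs w n) = μ (s (w 0)) * ∏ k ∈ Finset.range n, p (w k) (w (k+1)) with hCylDef
  -- the measure-theoretic PF condition
  set R : Prop := ∀ (i : ι) (B : Set X), MeasurableSet B →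
    μ (s i ∩ T ⁻¹' B) = ∑' j, c i j * μ (s j ∩ B) with hRDef
  -- coding preimages of cylinders
  have hmemC : ∀ x ∈ G, ∀ (n : ℕ) (w : ℕ → ι), ((∀ k ≤ n, φ x k = w k) ↔ x ∈ Cs w n) := by
    intro x hx n w
    constructor
    · intro h
      refine mem_iInter₂.mpr (fun k hk => ?_)
      rw [← h k hk]; exact hx k
    · intro h k hk
      by_contra hne
      exact (Set.disjoint_left.mp (hdisj hne)) (hx k) (mem_iInter₂.mp h k hk)
  have hpre : ∀ (n : ℕ) (w : ℕ → ι),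
      φ ⁻¹' {ω : ℕ → ι | ∀ k ≤ n, ω k = w k} =ᵐ[μ] Cs w n := by
    intro n w
    rw [Filter.eventuallyEq_set]
    have : ∀ᵐ x ∂μ, x ∈ G := by
      rw [MeasureTheory.ae_iff]; simpa [← compl_setOf] using hμGnull
    filter_upwards [this] with x hx
    exact hmemC x hx n w
  have hcylmeas : ∀ (n : ℕ) (w : ℕ → ι),
      MeasurableSet {ω : ℕ → ι | ∀ k ≤ n, ω k = w k} := by
    intro n w
    have : {ω : ℕ → ι | ∀ k ≤ n, ω k = w k} = ⋂ k ≤ n, (fun ω : ℕ → ι => ω k) ⁻¹' {w k} := by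
      ext ω; simp [mem_iInter₂]
    rw [this]
    exact MeasurableSet.biInter (to_countable _)
      (fun k _ => (measurable_pi_apply k) (measurableSet_singleton _))
  have hmapcyl : ∀ (n : ℕ) (w : ℕ → ι),
      (μ.map φ) {ω : ℕ → ι | ∀ k ≤ n, ω k = w k} = μ (Cs w n) := by
    intro n w
    rw [Measure.map_apply hφm (hcylmeas n w)]
    exact measure_congr (hpre n w)
  -- Step A : μ.map φ = ν ↔ Cyl
  have hCs0 : ∀ w : ℕ → ι, Cs w 0 = s (w 0) := by
    intro w
    simp only [hCs]
    ext x
    simp [Nat.le_zero]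
  have stepA : μ.map φ = ν ↔ Cyl := by
    constructor
    · intro h n w
      rw [← hmapcyl n w, h, hν]
    · intro hcyl
      rcases isEmpty_or_nonempty ι with hι | hι
      · have hempty : IsEmpty (ℕ → ι) := ⟨fun ω => (hι.false (ω 0))⟩
        ext A hA
        rw [A.eq_empty_of_isEmpty]
        simp
      · obtain ⟨f, hf⟩ := exists_surjective_nat ι
        set K : Set (Set (ℕ → ι)) :=
          {A | ∃ (n : ℕ) (w : ℕ → ι), A = {ω | ∀ k ≤ n, ω k = w k}} with hK
        have hsingle : ∀ (a : ℕ) (j : ι),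
            MeasurableSet[MeasurableSpace.generateFrom K] {ω : ℕ → ι | ω a = j} := by
          intro a j
          have heq : {ω : ℕ → ι | ω a = j}
              = ⋃ v ∈ {v : Fin (a+1) → ι | v ⟨a, Nat.lt_succ_self a⟩ = j},
                  {ω : ℕ → ι | ∀ k ≤ a, ω k =
                    (fun m => if h : m < a + 1 then v ⟨m, h⟩ else j) k} := by
            ext ω
            simp only [mem_setOf_eq, mem_iUnion, exists_prop]
            constructor
            · intro hω
              refine ⟨fun k => ω k.val, hω, fun k hk => ?_⟩
              simp [Nat.lt_succ_of_le hk]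
            · rintro ⟨v, hv, hω⟩
              have := hω a le_rfl
              simpa [Nat.lt_succ_self, hv] using this
          rw [heq]
          refine MeasurableSet.biUnion (Set.to_countable _) (fun v _ => ?_)
          exact MeasurableSpace.measurableSet_generateFrom ⟨a, _, rfl⟩
        have hgen : (inferInstance : MeasurableSpace (ℕ → ι))
            = MeasurableSpace.generateFrom K := by
          refine le_antisymm ?_ ?_
          · rw [MeasurableSpace.pi_eq_generateFrom_projections]
            refine MeasurableSpace.generateFrom_le ?_
            rintro t ⟨a, u, hu, rfl⟩
            have : (fun ω : ℕ → ι => ω a) ⁻¹' u = ⋃ j ∈ u, {ω : ℕ → ι | ω a = j} := by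
              ext ω; simp
            rw [this]
            exact MeasurableSet.biUnion (u.to_countable) (fun j _ => hsingle a j)
          · refine MeasurableSpace.generateFrom_le ?_
            rintro A ⟨n, w, rfl⟩
            exact hcylmeas n w
        have hpiK : IsPiSystem K := by
          rintro A ⟨n, w, rfl⟩ B ⟨m, v, rfl⟩ hne
          obtain ⟨ω, hω1, hω2⟩ := hne
          rcases le_total n m with hnm | hmn
          · refine ⟨m, v, ?_⟩
            apply Set.Subset.antisymm inter_subset_right
            intro ρ hρ
            refine ⟨fun k hk => ?_, hρ⟩
            rw [hρ k (hk.trans hnm), ← hω2 k (hk.trans hnm), hω1 k hk]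
          · refine ⟨n, w, ?_⟩
            apply Set.Subset.antisymm inter_subset_left
            intro ρ hρ
            refine ⟨hρ, fun k hk => ?_⟩
            rw [hρ k (hk.trans hmn), ← hω1 k (hk.trans hmn), hω2 k hk]
        refine Measure.ext_of_generateFrom_of_iUnion K
          (fun n => {ω : ℕ → ι | ∀ k ≤ 0, ω k = (fun _ => f n) k}) hgen hpiK ?_ ?_ ?_ ?_
        · ext ω
          simp only [mem_iUnion, mem_univ, iff_true]
          obtain ⟨n, hn⟩ := hf (ω 0)
          refine ⟨n, fun k hk => ?_⟩
          have : k = 0 := Nat.le_zero.mp hk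
          subst this
          exact hn.symm
        · intro n; exact ⟨0, fun _ => f n, rfl⟩
        · intro n
          rw [hmapcyl, hCs0]
          exact hμt (f n)
        · rintro A ⟨n, w, rfl⟩
          rw [hmapcyl, hν, hcyl]
  have hsplit : ∀ (w : ℕ → ι) (n : ℕ),
      Cs w (n+1) = s (w 0) ∩ T ⁻¹' (Cs (fun k => w (k+1)) n) := by
    intro w n
    ext x
    simp only [hCs, mem_iInter, mem_inter_iff, mem_preimage]
    constructor
    · intro h
      refine ⟨by simpa using h 0 (Nat.zero_le _), fun k hk => ?_⟩
      have := h (k+1) (Nat.succ_le_succ hk)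
      simpa [Function.iterate_succ_apply] using this
    · rintro ⟨h0, h1⟩ k hk
      cases k with
      | zero => simpa using h0
      | succ k =>
        have := h1 k (Nat.succ_le_succ_iff.mp hk)
        simpa [Function.iterate_succ_apply] using this
  -- Step B1 : Cyl → R
  have stepB1 : Cyl → R := by
    intro hcyl
    set S : Set (Set X) := {A | ∃ (n : ℕ) (w : ℕ → ι), A = Cs w n} with hSdef
    have hSle : MeasurableSpace.generateFrom S ≤ (inferInstance : MeasurableSpace X) :=
      MeasurableSpace.generateFrom_le (by rintro A ⟨n, w, rfl⟩; exact hCmeas w n)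
    have hpiS : IsPiSystem S := by
      rintro A ⟨n, w, rfl⟩ B' ⟨m, v, rfl⟩ hne
      obtain ⟨x, hx1, hx2⟩ := hne
      have hagree : ∀ k, k ≤ n → k ≤ m → w k = v k := by
        intro k hk1 hk2
        by_contra hne'
        exact (Set.disjoint_left.mp (hdisj hne'))
          (mem_iInter₂.mp hx1 k hk1) (mem_iInter₂.mp hx2 k hk2)
      rcases le_total n m with hnm | hmn
      · refine ⟨m, v, ?_⟩
        apply Subset.antisymm inter_subset_right
        intro y hy
        refine ⟨mem_iInter₂.mpr fun k hk => ?_, hy⟩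
        rw [hagree k hk (hk.trans hnm)]
        exact mem_iInter₂.mp hy k (hk.trans hnm)
      · refine ⟨n, w, ?_⟩
        apply Subset.antisymm inter_subset_left
        intro y hy
        refine ⟨hy, mem_iInter₂.mpr fun k hk => ?_⟩
        rw [← hagree k (hk.trans hmn) hk]
        exact mem_iInter₂.mp hy k (hk.trans hmn)
    -- the key identity on the σ-algebra generated by S
    have key : ∀ i (A : Set X), MeasurableSet[MeasurableSpace.generateFrom S] A →
        μ (s i ∩ T ⁻¹' A) = ∑' j, c i j * μ (s j ∩ A) := by
      intro i
      have main := MeasurableSpace.induction_on_inter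
        (m := MeasurableSpace.generateFrom S)
        (C := fun A _ => μ (s i ∩ T ⁻¹' A) = ∑' j, c i j * μ (s j ∩ A))
        rfl hpiS ?_ ?_ ?_ ?_
      · exact fun A hA => main A hA
      -- empty
      · simp
      -- basic
      · intro t htS
        obtain ⟨n, w, rfl⟩ := htS
        set w' : ℕ → ι := fun k => Nat.casesOn k i (fun k' => w k') with hw'
        have hw0 : w' 0 = i := rfl
        have hws : (fun k => w' (k+1)) = w := rfl
        have h1 : s i ∩ T ⁻¹' Cs w n = Cs w' (n+1) := by
          rw [hsplit w' n, hw0, hws]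
        have hww' : (∏ k ∈ Finset.range (n+1), p (w' k) (w' (k+1)))
            = (∏ k ∈ Finset.range n, p (w k) (w (k+1))) * p i (w 0) :=
          Finset.prod_range_succ' _ n
        have h2 : ∀ j, j ≠ w 0 → c i j * μ (s j ∩ Cs w n) = 0 := by
          intro j hj
          have hz : μ (s j ∩ Cs w n) = 0 := by
            have hsub : s j ∩ Cs w n ⊆ (∅ : Set X) := by
              intro x hx
              exact (Set.disjoint_left.mp (hdisj hj)) hx.1 (hCsub _ n hx.2)
            exact measure_mono_null hsub measure_empty
          rw [hz, mul_zero]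
        calc μ (s i ∩ T ⁻¹' Cs w n) = μ (Cs w' (n+1)) := by rw [h1]
          _ = μ (s i) * ((∏ k ∈ Finset.range n, p (w k) (w (k+1))) * p i (w 0)) := by
              rw [hcyl (n+1) w', hww']
              rfl
          _ = ∑' j, c i j * μ (s j ∩ Cs w n) := by
              rw [tsum_eq_single (w 0) h2,
                inter_eq_self_of_subset_right (hCsub w n), hcyl n w,
                ← mul_assoc (c i (w 0)), hcmul]
              ring
      -- compl
      · intro t ht hP
        have htm : MeasurableSet t := hSle _ ht
        have hsum1 : μ (s i ∩ T ⁻¹' tᶜ) + μ (s i ∩ T ⁻¹' t) = μ (s i) := by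
          have e : s i ∩ T ⁻¹' tᶜ = s i \ T ⁻¹' t := by
            ext x; simp [mem_preimage]
          rw [e, add_comm]
          exact measure_inter_add_diff (s i) (htm.preimage hT)
        have hsum2 : (∑' j, c i j * μ (s j ∩ tᶜ)) + (∑' j, c i j * μ (s j ∩ t)) = μ (s i) := by
          rw [← ENNReal.tsum_add]
          have e : ∀ j, c i j * μ (s j ∩ tᶜ) + c i j * μ (s j ∩ t) = c i j * μ (s j) := by
            intro j
            rw [← mul_add]
            congr 1
            have e2 : s j ∩ tᶜ = s j \ t := by ext x; simp
            rw [e2, add_comm]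
            exact measure_inter_add_diff (s j) htm
          rw [tsum_congr e]
          calc ∑' j, c i j * μ (s j) = ∑' j, μ (s i) * p i j := tsum_congr (fun j => hcmul i j)
            _ = μ (s i) * ∑' j, p i j := ENNReal.tsum_mul_left
            _ = μ (s i) := by rw [hp1 i, mul_one]
        have hYfin : μ (s i ∩ T ⁻¹' t) ≠ ⊤ :=
          (lt_of_le_of_lt (measure_mono inter_subset_left) (hμs i).2).ne
        rw [hP] at hsum1 hYfin
        exact WithTop.add_right_cancel hYfin (hsum1.trans hsum2.symm)
      -- disjoint union
      · intro f hfd hfm hPf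
        have hfm' : ∀ n, MeasurableSet (f n) := fun n => hSle _ (hfm n)
        have h1 : s i ∩ T ⁻¹' (⋃ n, f n) = ⋃ n, s i ∩ T ⁻¹' f n := by
          rw [preimage_iUnion, inter_iUnion]
        have hd1 : Pairwise (Function.onFun Disjoint fun n => s i ∩ T ⁻¹' f n) := by
          intro a b hab
          exact ((hfd hab).preimage T).mono inter_subset_right inter_subset_right
        rw [h1, measure_iUnion hd1 (fun n => (hsm i).inter ((hfm' n).preimage hT))]
        calc ∑' n, μ (s i ∩ T ⁻¹' f n) = ∑' n, ∑' j, c i j * μ (s j ∩ f n) :=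
              tsum_congr hPf
          _ = ∑' j, ∑' n, c i j * μ (s j ∩ f n) := ENNReal.tsum_comm
          _ = ∑' j, c i j * ∑' n, μ (s j ∩ f n) := tsum_congr (fun j => ENNReal.tsum_mul_left)
          _ = ∑' j, c i j * μ (⋃ n, s j ∩ f n) := by
              refine tsum_congr (fun j => ?_)
              congr 1
              refine (measure_iUnion ?_ (fun n => (hsm j).inter (hfm' n))).symm
              intro a b hab
              exact (hfd hab).mono inter_subset_right inter_subset_right
          _ = ∑' j, c i j * μ (s j ∩ ⋃ n, f n) := by
              refine tsum_congr (fun j => ?_)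
              rw [inter_iUnion]
    -- approximate sets of the σ-algebra generated by the pulled-back partition
    have happrox : ∀ A : Set X,
        MeasurableSet[MeasurableSpace.generateFrom
          {t : Set X | ∃ (i' : ι) (n : ℕ), t = T^[n] ⁻¹' s i'}] A →
        ∃ A', MeasurableSet[MeasurableSpace.generateFrom S] A' ∧
          lam ((A \ A') ∪ (A' \ A)) = 0 := by
      intro A hA
      refine MeasurableSpace.generateFrom_induction _
        (fun A _ => ∃ A', MeasurableSet[MeasurableSpace.generateFrom S] A' ∧
          lam ((A \ A') ∪ (A' \ A)) = 0) ?_ ?_ ?_ ?_ A hA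
      -- generators
      · rintro t ⟨j, m, rfl⟩ -
        set wrd : (Fin m → ι) → ℕ → ι :=
          fun v k => if h : k < m then v ⟨k, h⟩ else j with hwrd
        refine ⟨⋃ v : Fin m → ι, Cs (wrd v) m, ?_, ?_⟩
        · exact @MeasurableSet.iUnion X _ (MeasurableSpace.generateFrom S) _ _
            (fun v => MeasurableSpace.measurableSet_generateFrom ⟨m, wrd v, rfl⟩)
        · have hsub1 : (⋃ v : Fin m → ι, Cs (wrd v) m) ⊆ T^[m] ⁻¹' s j := by
            rintro x hx
            obtain ⟨v, hv⟩ := mem_iUnion.mp hx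
            have := mem_iInter₂.mp hv m le_rfl
            simpa [hwrd] using this
          have hsub2 : T^[m] ⁻¹' s j \ (⋃ v : Fin m → ι, Cs (wrd v) m)
              ⊆ ⋃ k ∈ Finset.range m, T^[k] ⁻¹' ((⋃ i', s i')ᶜ) := by
            intro x hx
            by_contra hxn
            apply hx.2
            simp only [mem_iUnion, not_exists, exists_prop, not_and] at hxn
            have hch : ∀ k : Fin m, ∃ i', T^[(k : ℕ)] x ∈ s i' := by
              intro k
              have h := hxn k.val (Finset.mem_range.mpr k.isLt)
              simpa [mem_preimage, mem_compl_iff, mem_iUnion, not_not] using h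
            choose v hv using hch
            refine mem_iUnion.mpr ⟨v, mem_iInter₂.mpr fun k hk => ?_⟩
            rcases lt_or_eq_of_le hk with hlt | heq
            · simpa [hwrd, hlt] using hv ⟨k, hlt⟩
            · subst heq
              simpa [hwrd] using hx.1
          have hnull2 : lam (⋃ k ∈ Finset.range m, T^[k] ⁻¹' ((⋃ i', s i')ᶜ)) = 0 := by
            refine (measure_biUnion_null_iff (Finset.countable_toSet _)).mpr ?_
            intro k _
            exact hnulln k _ hcover
          have e : (⋃ v : Fin m → ι, Cs (wrd v) m) \ T^[m] ⁻¹' s j = ∅ :=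
            diff_eq_empty.mpr hsub1
          rw [e, union_empty]
          exact measure_mono_null hsub2 hnull2
      -- empty
      · exact ⟨∅, @MeasurableSet.empty _ (MeasurableSpace.generateFrom S), by simp⟩
      -- compl
      · rintro t - ⟨A', hA'm, hA'0⟩
        refine ⟨A'ᶜ, hA'm.compl, ?_⟩
        have e : (tᶜ \ A'ᶜ) ∪ (A'ᶜ \ tᶜ) = (t \ A') ∪ (A' \ t) := by
          ext x; simp only [mem_union, mem_diff, mem_compl_iff]; tauto
        rw [e]
        exact hA'0
      -- union
      · intro f hf hPf
        choose A' hA'm hA'0 using hPf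
        refine ⟨⋃ n, A' n, MeasurableSet.iUnion hA'm, ?_⟩
        have hsub : ((⋃ n, f n) \ (⋃ n, A' n)) ∪ ((⋃ n, A' n) \ (⋃ n, f n))
            ⊆ ⋃ n, ((f n \ A' n) ∪ (A' n \ f n)) := by
          intro x hx
          rcases hx with hx | hx
          · obtain ⟨n, hn⟩ := mem_iUnion.mp hx.1
            exact mem_iUnion.mpr ⟨n, Or.inl ⟨hn, fun h => hx.2 (mem_iUnion.mpr ⟨n, h⟩)⟩⟩
          · obtain ⟨n, hn⟩ := mem_iUnion.mp hx.1
            exact mem_iUnion.mpr ⟨n, Or.inr ⟨hn, fun h => hx.2 (mem_iUnion.mpr ⟨n, h⟩)⟩⟩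
        refine measure_mono_null hsub ?_
        exact measure_iUnion_null hA'0
    -- conclude
    intro i B hB
    obtain ⟨A1, hA1m, hA1null⟩ := hM1 B hB
    obtain ⟨A2, hA2m, hA2null⟩ := happrox A1 hA1m
    have hBA2 : lam ((B \ A2) ∪ (A2 \ B)) = 0 := by
      refine measure_mono_null ?_ (measure_union_null hA1null hA2null)
      intro x hx
      simp only [mem_union, mem_diff] at hx ⊢
      by_cases h1 : x ∈ A1 <;> tauto
    have hTsym : lam ((T ⁻¹' B \ T ⁻¹' A2) ∪ (T ⁻¹' A2 \ T ⁻¹' B)) = 0 := by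
      have e : (T ⁻¹' B \ T ⁻¹' A2) ∪ (T ⁻¹' A2 \ T ⁻¹' B)
          = T ⁻¹' ((B \ A2) ∪ (A2 \ B)) := by
        ext x; simp [mem_preimage]
      rw [e]
      exact hnull _ hBA2
    have e1 : μ (s i ∩ T ⁻¹' B) = μ (s i ∩ T ⁻¹' A2) := by
      refine aux_meq μ _ _ (measure_mono_null ?_ (hμlam hTsym))
      intro x hx
      simp only [mem_union, mem_diff, mem_inter_iff] at hx ⊢
      tauto
    have e2 : ∀ j, μ (s j ∩ A2) = μ (s j ∩ B) := by
      intro j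
      refine aux_meq μ _ _ (measure_mono_null ?_ (hμlam hBA2))
      intro x hx
      simp only [mem_union, mem_diff, mem_inter_iff] at hx ⊢
      tauto
    rw [e1, key i A2 hA2m]
    exact tsum_congr fun j => by rw [e2 j]
  -- Step B2 : R → Cyl
  have stepB2 : R → Cyl := by
    intro hR n
    induction n with
    | zero =>
        intro w
        rw [hCs0]
        simp
    | succ n ih =>
        intro w
        rw [hsplit w n, hR (w 0) _ (hCmeas _ n)]
        have honly : ∀ j, j ≠ w 1 → c (w 0) j * μ (s j ∩ Cs (fun k => w (k+1)) n) = 0 := by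
          intro j hj
          have hz : μ (s j ∩ Cs (fun k => w (k+1)) n) = 0 := by
            have hsub : s j ∩ Cs (fun k => w (k+1)) n ⊆ (∅ : Set X) := by
              intro x hx
              exact (Set.disjoint_left.mp (hdisj hj)) hx.1 (hCsub _ n hx.2)
            exact measure_mono_null hsub measure_empty
          rw [hz, mul_zero]
        rw [tsum_eq_single (w 1) honly]
        have hin : s (w 1) ∩ Cs (fun k => w (k+1)) n = Cs (fun k => w (k+1)) n :=
          inter_eq_self_of_subset_right (hCsub _ n)
        rw [hin, ih (fun k => w (k+1))]
        rw [← mul_assoc, hcmul, Finset.prod_range_succ']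
        ring
  have hcsum : ∀ i, ∑' j, c i j * μ (s j) = μ (s i) := by
    intro i
    calc ∑' j, c i j * μ (s j) = ∑' j, μ (s i) * p i j := tsum_congr (fun j => hcmul i j)
      _ = μ (s i) * ∑' j, p i j := ENNReal.tsum_mul_left
      _ = μ (s i) := by rw [hp1 i, mul_one]
  -- Step C : R ↔ integral condition
  have stepC : R ↔ ∀ (i : ι) (g : X → ℝ), Measurable g → (∃ C : ℝ, ∀ x, |g x| ≤ C) →
        ∫ x, Set.indicator (s i) (fun _ => (1:ℝ)) x * g (T x) ∂μ
          = ∫ x, (∑' j : ι, (μ (s i) * p i j / μ (s j)).toReal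
              * Set.indicator (s j) (fun _ => (1:ℝ)) x) * g x ∂μ := by
    have hcr : ∀ i j, (μ (s i) * p i j / μ (s j)) = c i j := fun _ _ => rfl
    set F' : ι → X → ℝ≥0∞ := fun i x => ∑' j, (s j).indicator (fun _ => c i j) x with hF'
    have hFmeas : ∀ i, Measurable (F' i) :=
      fun i => Measurable.ennreal_tsum (fun j => measurable_const.indicator (hsm j))
    have hF'app : ∀ i x, F' i x = ∑' j, (s j).indicator (fun _ => c i j) x := fun _ _ => rfl
    have hFone : ∀ i x j0, x ∈ s j0 → F' i x = c i j0 := by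
      intro i x j0 hj0
      rw [hF'app]
      have h := tsum_eq_single (f := fun j => (s j).indicator (fun _ => c i j) x) (L := SummationFilter.unconditional ι) j0
        (fun j hj => by
          have hx : x ∉ s j := fun h => (Set.disjoint_left.mp (hdisj hj)) h hj0
          simp [indicator_of_notMem hx])
      rw [h]
      exact indicator_of_mem hj0 _
    have hFzero : ∀ i x, (∀ j, x ∉ s j) → F' i x = 0 := by
      intro i x hx
      have : ∀ j, (s j).indicator (fun _ => c i j) x = 0 :=
        fun j => indicator_of_notMem (hx j) _
      simp only [hF']
      rw [tsum_congr this]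
      exact tsum_zero
    have hFlt : ∀ i x, F' i x ≠ ⊤ := by
      intro i x
      by_cases hx : ∃ j, x ∈ s j
      · obtain ⟨j0, hj0⟩ := hx
        rw [hFone i x j0 hj0]; exact hcfin i j0
      · push_neg at hx
        rw [hFzero i x hx]; exact ENNReal.zero_ne_top
    have hFreal : ∀ i x, (∑' j : ι, (c i j).toReal * (s j).indicator (fun _ => (1:ℝ)) x)
        = (F' i x).toReal := by
      intro i x
      by_cases hx : ∃ j, x ∈ s j
      · obtain ⟨j0, hj0⟩ := hx
        rw [hFone i x j0 hj0]
        refine (tsum_eq_single j0 (fun j hj => ?_)).trans ?_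
        · have hxj : x ∉ s j := fun h => (Set.disjoint_left.mp (hdisj hj)) h hj0
          simp [indicator_of_notMem hxj]
        · simp [indicator_of_mem hj0]
      · push_neg at hx
        rw [hFzero i x hx]
        have : ∀ j : ι, (c i j).toReal * (s j).indicator (fun _ => (1:ℝ)) x = 0 := by
          intro j; simp [indicator_of_notMem (hx j)]
        rw [tsum_congr this, tsum_zero, ENNReal.toReal_zero]
    have hlint : ∀ i (B : Set X), MeasurableSet B →
        ∫⁻ x in B, F' i x ∂μ = ∑' j, c i j * μ (s j ∩ B) := by
      intro i B hB
      rw [lintegral_tsum (fun j => (measurable_const.indicator (hsm j)).aemeasurable)]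
      refine tsum_congr (fun j => ?_)
      rw [lintegral_indicator (hsm j), setLIntegral_const, Measure.restrict_apply (hsm j)]
    have hwd : ∀ i (B : Set X), MeasurableSet B →
        (μ.withDensity (F' i)) B = ∑' j, c i j * μ (s j ∩ B) := by
      intro i B hB
      rw [withDensity_apply _ hB, hlint i B hB]
    have hRHS : ∀ i (g : X → ℝ), Measurable g →
        ∫ x, (∑' j : ι, (c i j).toReal * (s j).indicator (fun _ => (1:ℝ)) x) * g x ∂μ
          = ∫ y, g y ∂(μ.withDensity (F' i)) := by
      intro i g hgm
      have hcoe : (fun x => ((F' i x).toNNReal : ℝ≥0∞)) = F' i := by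
        funext x; exact ENNReal.coe_toNNReal (hFlt i x)
      rw [show μ.withDensity (F' i) = μ.withDensity (fun x => ((F' i x).toNNReal : ℝ≥0∞)) by
        rw [hcoe]]
      rw [integral_withDensity_eq_integral_smul (hFmeas i).ennreal_toNNReal g]
      refine integral_congr_ae (.of_forall fun x => ?_)
      simp only [NNReal.smul_def, smul_eq_mul]
      rw [hFreal i x]
      rfl
    simp only [hcr]
    constructor
    · intro hR i g hgm hgb
      have hmeq : (μ.restrict (s i)).map T = μ.withDensity (F' i) := by
        refine Measure.ext (fun B hB => ?_)
        rw [Measure.map_apply hT hB, Measure.restrict_apply (hT hB), hwd i B hB, inter_comm]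
        exact hR i B hB
      have hL : ∫ x, (s i).indicator (fun _ => (1:ℝ)) x * g (T x) ∂μ
          = ∫ y, g y ∂((μ.restrict (s i)).map T) := by
        have e : ∀ x, (s i).indicator (fun _ => (1:ℝ)) x * g (T x)
            = (s i).indicator (fun y => g (T y)) x := by
          intro x; by_cases hx : x ∈ s i <;> simp [hx]
        calc ∫ x, (s i).indicator (fun _ => (1:ℝ)) x * g (T x) ∂μ
            = ∫ x, (s i).indicator (fun y => g (T y)) x ∂μ :=
              integral_congr_ae (.of_forall e)
          _ = ∫ x in s i, g (T x) ∂μ := integral_indicator (hsm i)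
          _ = ∫ y, g y ∂((μ.restrict (s i)).map T) :=
              (integral_map hT.aemeasurable hgm.aestronglyMeasurable).symm
      rw [hL, hmeq, hRHS i g hgm]
    · intro hQ i B hB
      have hbnd : ∃ C : ℝ, ∀ x, |B.indicator (fun _ => (1:ℝ)) x| ≤ C := by
        refine ⟨1, fun x => ?_⟩
        by_cases hx : x ∈ B <;> simp [hx]
      have hQ' := hQ i (B.indicator (fun _ => (1:ℝ)))
        (measurable_const.indicator hB) hbnd
      have hLeq : ∫ x, (s i).indicator (fun _ => (1:ℝ)) x * B.indicator (fun _ => (1:ℝ)) (T x) ∂μ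
          = (μ (s i ∩ T ⁻¹' B)).toReal := by
        have e : ∀ x, (s i).indicator (fun _ => (1:ℝ)) x * B.indicator (fun _ => (1:ℝ)) (T x)
            = (s i ∩ T ⁻¹' B).indicator (fun _ => (1:ℝ)) x := by
          intro x
          by_cases h1 : x ∈ s i <;> by_cases h2 : T x ∈ B <;>
            simp [h1, h2, indicator, mem_preimage]
        rw [integral_congr_ae (.of_forall e)]
        have := integral_indicator_one ((hsm i).inter (hT hB)) (μ := μ)
        simpa [measureReal_def, Pi.one_def] using this
      have hReq : ∫ x, (∑' j : ι, (c i j).toReal * (s j).indicator (fun _ => (1:ℝ)) x)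
            * B.indicator (fun _ => (1:ℝ)) x ∂μ
          = (∑' j, c i j * μ (s j ∩ B)).toReal := by
        rw [hRHS i _ (measurable_const.indicator hB)]
        rw [show ∫ y, B.indicator (fun _ => (1:ℝ)) y ∂(μ.withDensity (F' i))
            = ((μ.withDensity (F' i)) B).toReal by
          have := integral_indicator_one hB (μ := μ.withDensity (F' i))
          simpa [measureReal_def, Pi.one_def] using this]
        rw [hwd i B hB]
      rw [hLeq, hReq] at hQ'
      have hfin1 : μ (s i ∩ T ⁻¹' B) ≠ ⊤ :=
        (lt_of_le_of_lt (measure_mono inter_subset_left) (hμs i).2).ne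
      have hfin2 : (∑' j, c i j * μ (s j ∩ B)) ≠ ⊤ := by
        refine (lt_of_le_of_lt ?_ (hμs i).2).ne
        rw [← hcsum i]
        exact ENNReal.tsum_le_tsum
          (fun j => mul_le_mul_right (measure_mono inter_subset_left) _)
      exact (ENNReal.toReal_eq_toReal_iff' hfin1 hfin2).mp hQ'
  constructor
  · rw [stepA, ← stepC]
    exact ⟨stepB1, stepB2⟩
  · intro hmap
    have hshiftm : Measurable (fun ω : ℕ → ι => fun n => ω (n+1)) :=
      measurable_pi_lambda _ (fun n => measurable_pi_apply (n+1))
    have hcomm : (fun ω : ℕ → ι => fun n => ω (n+1)) ∘ φ =ᵐ[μ] φ ∘ T := by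
      have h1 : ∀ᵐ x ∂lam, x ∈ G ∧ T x ∈ G := by
        have hc : lam (Gᶜ ∪ T ⁻¹' Gᶜ) = 0 :=
          measure_union_null hGnull (hnull _ hGnull)
        rw [ae_iff]
        refine measure_mono_null ?_ hc
        intro x hx
        simp only [mem_setOf_eq, not_and_or] at hx
        rcases hx with hx | hx
        · exact Or.inl hx
        · exact Or.inr hx
      have h2 : ∀ᵐ x ∂μ, x ∈ G ∧ T x ∈ G := h1.filter_mono hμlam.ae_le
      filter_upwards [h2] with x hx
      funext n
      have ha : T^[n] (T x) ∈ s (φ (T x) n) := hx.2 n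
      rw [← Function.iterate_succ_apply] at ha
      have hb : T^[n+1] x ∈ s (φ x (n+1)) := hx.1 (n+1)
      simp only [Function.comp_apply]
      by_contra hne
      exact (Set.disjoint_left.mp (hdisj hne)) hb ha
    constructor
    · intro hTinv
      calc ν.map (fun ω n => ω (n+1)) = (μ.map φ).map (fun ω n => ω (n+1)) := by rw [hmap]
        _ = μ.map ((fun ω : ℕ → ι => fun n => ω (n+1)) ∘ φ) := Measure.map_map hshiftm hφm
        _ = μ.map (φ ∘ T) := Measure.map_congr hcomm
        _ = (μ.map T).map φ := (Measure.map_map hφm hT).symm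
        _ = μ.map φ := by rw [hTinv]
        _ = ν := hmap
    · intro hsinv
      have hkey : μ.map (φ ∘ T) = μ.map φ := by
        calc μ.map (φ ∘ T) = μ.map ((fun ω : ℕ → ι => fun n => ω (n+1)) ∘ φ) :=
              Measure.map_congr hcomm.symm
          _ = (μ.map φ).map (fun ω n => ω (n+1)) := (Measure.map_map hshiftm hφm).symm
          _ = ν.map (fun ω n => ω (n+1)) := by rw [hmap]
          _ = ν := hsinv
          _ = μ.map φ := hmap.symm
      have hkey' : ∀ A : Set (ℕ → ι), MeasurableSet A →
          μ.map T (φ ⁻¹' A) = μ (φ ⁻¹' A) := by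
        intro A hA
        have h1 : μ.map T (φ ⁻¹' A) = ((μ.map T).map φ) A :=
          (Measure.map_apply hφm hA).symm
        rw [h1, Measure.map_map hφm hT, hkey, Measure.map_apply hφm hA]
      have habs : ∀ Z : Set X, lam Z = 0 → μ.map T Z = 0 := by
        intro Z hZ
        refine le_antisymm ?_ zero_le
        calc μ.map T Z ≤ μ.map T (toMeasurable lam Z) :=
              measure_mono (subset_toMeasurable lam Z)
          _ = μ (T ⁻¹' toMeasurable lam Z) :=
              Measure.map_apply hT (measurableSet_toMeasurable _ _)
          _ = 0 := by
              refine hμlam ?_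
              refine hnull _ ?_
              rwa [measure_toMeasurable]
      have happrox2 : ∀ A : Set X, MeasurableSet[MeasurableSpace.generateFrom
          {t : Set X | ∃ (i' : ι) (n : ℕ), t = T^[n] ⁻¹' s i'}] A →
          ∃ A2 : Set (ℕ → ι), MeasurableSet A2 ∧
            lam ((A \ φ ⁻¹' A2) ∪ (φ ⁻¹' A2 \ A)) = 0 := by
        intro A hA
        refine MeasurableSpace.generateFrom_induction _
          (fun A _ => ∃ A2 : Set (ℕ → ι), MeasurableSet A2 ∧
            lam ((A \ φ ⁻¹' A2) ∪ (φ ⁻¹' A2 \ A)) = 0) ?_ ?_ ?_ ?_ A hA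
        · rintro t ⟨j, n, rfl⟩ -
          have hms : MeasurableSet {ω : ℕ → ι | ω n = j} := by
            have : {ω : ℕ → ι | ω n = j} = (fun ω : ℕ → ι => ω n) ⁻¹' {j} := rfl
            rw [this]
            exact (measurable_pi_apply n) (measurableSet_singleton j)
          refine ⟨{ω : ℕ → ι | ω n = j}, hms, ?_⟩
          refine measure_mono_null ?_ hGnull
          intro x hx
          simp only [mem_compl_iff, hG, mem_setOf_eq, not_forall]
          by_contra hxG
          push_neg at hxG
          rcases hx with ⟨h1, h2⟩ | ⟨h1, h2⟩
          · apply h2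
            have hmem : T^[n] x ∈ s j := h1
            have hmem2 : T^[n] x ∈ s (φ x n) := hxG n
            simp only [mem_preimage, mem_setOf_eq]
            by_contra hne
            exact (Set.disjoint_left.mp (hdisj hne)) hmem2 hmem
          · apply h2
            have h1' : φ x n = j := h1
            have : T^[n] x ∈ s (φ x n) := hxG n
            rwa [h1'] at this
        · exact ⟨∅, MeasurableSet.empty, by simp⟩
        · rintro t - ⟨A2, hA2m, h0⟩
          refine ⟨A2ᶜ, hA2m.compl, ?_⟩
          have e : (tᶜ \ φ ⁻¹' A2ᶜ) ∪ (φ ⁻¹' A2ᶜ \ tᶜ)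
              = (t \ φ ⁻¹' A2) ∪ (φ ⁻¹' A2 \ t) := by
            ext x
            simp only [mem_union, mem_diff, mem_compl_iff, mem_preimage]
            tauto
          rw [e]
          exact h0
        · intro f hf hPf
          choose A2 hA2m h0 using hPf
          refine ⟨⋃ n, A2 n, MeasurableSet.iUnion hA2m, ?_⟩
          have hsub : ((⋃ n, f n) \ φ ⁻¹' (⋃ n, A2 n)) ∪ (φ ⁻¹' (⋃ n, A2 n) \ ⋃ n, f n)
              ⊆ ⋃ n, ((f n \ φ ⁻¹' A2 n) ∪ (φ ⁻¹' A2 n \ f n)) := by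
            intro x hx
            rcases hx with ⟨hx1, hx2⟩ | ⟨hx1, hx2⟩
            · obtain ⟨n, hn⟩ := mem_iUnion.mp hx1
              refine mem_iUnion.mpr ⟨n, Or.inl ⟨hn, fun h => hx2 ?_⟩⟩
              simp only [mem_preimage, mem_iUnion] at h ⊢
              exact ⟨n, h⟩
            · obtain ⟨n, hn⟩ := mem_iUnion.mp (by simpa [preimage_iUnion] using hx1)
              refine mem_iUnion.mpr ⟨n, Or.inr ⟨hn, fun h => hx2 (mem_iUnion.mpr ⟨n, h⟩)⟩⟩
          exact measure_mono_null hsub (measure_iUnion_null h0)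
      refine Measure.ext (fun B hB => ?_)
      obtain ⟨A1, hA1m, hA1null⟩ := hM1 B hB
      obtain ⟨A2, hA2m, hA2null⟩ := happrox2 A1 hA1m
      have hBA2 : lam ((B \ φ ⁻¹' A2) ∪ (φ ⁻¹' A2 \ B)) = 0 := by
        refine measure_mono_null ?_ (measure_union_null hA1null hA2null)
        intro x hx
        simp only [mem_union, mem_diff] at hx ⊢
        by_cases h1 : x ∈ A1 <;> tauto
      have e1 : μ.map T B = μ.map T (φ ⁻¹' A2) := aux_meq _ _ _ (habs _ hBA2)
      have e2 : μ (φ ⁻¹' A2) = μ B := by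
        refine aux_meq μ _ _ (hμlam ?_)
        rw [union_comm] at hBA2
        exact hBA2
      rw [e1, hkey' A2 hA2m, e2]

end
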